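/- Let S² be the unit sphere centered at the origin o in E³, let p ∈ S², and let H be the tangent plane of S² at p. Let T = conv{p_1, p_2, p_3} be a nondegenerate triangle contained in H with p_1 = p, and for i = 1, 2, 3 let φ_i be the (Euclidean) angle of T at p_i. Let p'_i = p_i/‖p_i‖ be the central projection of p_i onto S² from o, let φ'_i be the spherical angle of the spherical triangle p'_1 p'_2 p'_3 at p'_i (the angle at o between the components of p'_j and p'_k orthogonal to p'_i, for {i,j,k} = {1,2,3}), and let d'_i = arccos⟨p'_j, p'_k⟩ be the spherical length of the side opposite p'_i. Then tan φ_2 = tan φ'_2 · cos d'_3 and tan φ_3 = tan φ'_3 · cos d'_2. -/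

import Mathlib

open MeasureTheory Metric

/-- Central projection of a point of `E³` onto the unit sphere `S²` from the origin. -/
noncomputable def sphProj (x : EuclideanSpace ℝ (Fin 3)) : EuclideanSpace ℝ (Fin 3) :=
  ‖x‖⁻¹ • x

/-- The spherical angle at `v` of the spherical triangle with vertices `u, v, w` on `S²`:
the angle between the components of `u` and `w` orthogonal to `v`. -/
noncomputable def sphericalAngle (u v w : EuclideanSpace ℝ (Fin 3)) : ℝ :=
  InnerProductGeometry.angle (u - (inner ℝ u v : ℝ) • v) (w - (inner ℝ w v : ℝ) • v)

/-- The spherical distance between two points `u, w` of the unit sphere `S²`. -/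
noncomputable def sphericalDist (u w : EuclideanSpace ℝ (Fin 3)) : ℝ :=
  Real.arccos (inner ℝ u w : ℝ)

lemma tan_angle_eq {V : Type*} [NormedAddCommGroup V] [InnerProductSpace ℝ V] (x y : V) :
    Real.tan (InnerProductGeometry.angle x y) =
      Real.sqrt (‖x‖ ^ 2 * ‖y‖ ^ 2 - (inner ℝ x y : ℝ) ^ 2) / (inner ℝ x y : ℝ) := by
  rw [Real.tan_eq_sin_div_cos, InnerProductGeometry.cos_angle]
  have hs := InnerProductGeometry.sin_angle_mul_norm_mul_norm x y
  rw [real_inner_self_eq_norm_sq, real_inner_self_eq_norm_sq] at hs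
  rcases eq_or_ne (‖x‖ * ‖y‖) 0 with h | h
  · have hxy : (inner ℝ x y : ℝ) = 0 := by
      have h1 := abs_real_inner_le_norm x y
      rw [h] at h1
      exact abs_eq_zero.mp (le_antisymm h1 (abs_nonneg _))
    simp [hxy]
  · have hsin : Real.sin (InnerProductGeometry.angle x y) =
        Real.sqrt (‖x‖ ^ 2 * ‖y‖ ^ 2 - (inner ℝ x y : ℝ) ^ 2) / (‖x‖ * ‖y‖) := by
      rw [eq_div_iff h, hs]; ring_nf
    rw [hsin]
    rcases eq_or_ne (inner ℝ x y : ℝ) 0 with hi | hi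
    · simp [hi]
    · field_simp
      exact mul_div_cancel_left₀ _ h

set_option maxHeartbeats 2000000 in
lemma key (p x y : EuclideanSpace ℝ (Fin 3)) (hp : ‖p‖ = 1)
    (hxp : (inner ℝ x p : ℝ) = 0) (hyp : (inner ℝ y p : ℝ) = 0) :
    Real.tan (InnerProductGeometry.angle (p - (p + x)) ((p + y) - (p + x))) =
      Real.tan (sphericalAngle (sphProj p) (sphProj (p + x)) (sphProj (p + y))) *
        Real.cos (sphericalDist (sphProj p) (sphProj (p + x))) := by
  set s : ℝ := ‖x‖ ^ 2 with hs
  set t : ℝ := ‖y‖ ^ 2 with ht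
  set c : ℝ := (inner ℝ x y : ℝ) with hc
  set r : ℝ := ‖p + x‖ with hrdef
  set ρ : ℝ := ‖p + y‖ with hρdef
  have hpp : (inner ℝ p p : ℝ) = 1 := by
    rw [real_inner_self_eq_norm_sq, hp]; norm_num
  have hpx : (inner ℝ p x : ℝ) = 0 := by rw [real_inner_comm]; exact hxp
  have hpy : (inner ℝ p y : ℝ) = 0 := by rw [real_inner_comm]; exact hyp
  have hyx : (inner ℝ y x : ℝ) = c := by rw [hc, real_inner_comm]
  have hxx : (inner ℝ x x : ℝ) = s := real_inner_self_eq_norm_sq x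
  have hyy : (inner ℝ y y : ℝ) = t := real_inner_self_eq_norm_sq y
  have hs0 : 0 ≤ s := sq_nonneg _
  have ht0 : 0 ≤ t := sq_nonneg _
  have hr2 : r ^ 2 = 1 + s := by
    rw [hrdef, norm_add_sq_real, hp, hpx]; ring
  have hρ2 : ρ ^ 2 = 1 + t := by
    rw [hρdef, norm_add_sq_real, hp, hpy]; ring
  have hr1 : 1 ≤ r := by nlinarith [norm_nonneg (p + x)]
  have hρ1 : 1 ≤ ρ := by nlinarith [norm_nonneg (p + y)]
  have hr0 : 0 < r := by linarith
  have hρ0 : 0 < ρ := by linarith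
  have hπp : sphProj p = p := by rw [sphProj, hp]; simp
  have hπ2 : sphProj (p + x) = r⁻¹ • (p + x) := rfl
  have hπ3 : sphProj (p + y) = ρ⁻¹ • (p + y) := rfl
  -- the distance factor
  have hdist : Real.cos (sphericalDist (sphProj p) (sphProj (p + x))) = r⁻¹ := by
    rw [hπp, hπ2, sphericalDist]
    have : (inner ℝ p (r⁻¹ • (p + x)) : ℝ) = r⁻¹ := by
      rw [real_inner_smul_right, inner_add_right, hpp, hpx]; ring
    rw [this, Real.cos_arccos (by positivity |> le_trans (by norm_num : (-1:ℝ) ≤ 0)) (by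
      rw [inv_le_one_iff₀]; right; exact hr1)]
  rw [hdist]
  set a : EuclideanSpace ℝ (Fin 3) := s • p - x with ha
  set b : EuclideanSpace ℝ (Fin 3) := (s - c) • p + (1 + s) • y - (1 + c) • x with hb
  have hAngle : sphericalAngle (sphProj p) (sphProj (p + x)) (sphProj (p + y)) =
      InnerProductGeometry.angle a b := by
    rw [hπp, hπ2, hπ3, sphericalAngle]
    have h1 : (inner ℝ p (r⁻¹ • (p + x)) : ℝ) = r⁻¹ := by
      rw [real_inner_smul_right, inner_add_right, hpp, hpx]; ring
    have h2 : (inner ℝ (ρ⁻¹ • (p + y)) (r⁻¹ • (p + x)) : ℝ) = ρ⁻¹ * (r⁻¹ * (1 + c)) := by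
      rw [real_inner_smul_left, real_inner_smul_right, inner_add_left, inner_add_right,
        inner_add_right, hpp, hpx, hyp, hyx]; ring
    rw [h1, h2]
    have e1 : p - r⁻¹ • (r⁻¹ • (p + x)) = ((r ^ 2)⁻¹) • a := by
      rw [ha]; match_scalars <;> field_simp <;> nlinarith [hr2]
    have e2 : ρ⁻¹ • (p + y) - (ρ⁻¹ * (r⁻¹ * (1 + c))) • (r⁻¹ • (p + x))
        = (ρ⁻¹ * (r ^ 2)⁻¹) • b := by
      rw [hb]; match_scalars <;> field_simp <;>
        first
          | linear_combination (ρ ^ 2 * r ^ 2) * hr2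
          | linear_combination hr2
          | exact Or.inl (by ring)
    rw [e1, e2, InnerProductGeometry.angle_smul_left_of_pos _ _ (by positivity),
      InnerProductGeometry.angle_smul_right_of_pos _ _ (by positivity)]
  have hL : p - (p + x) = -x := by abel
  have hR : (p + y) - (p + x) = y - x := by abel
  rw [hAngle, hL, hR, tan_angle_eq, tan_angle_eq]
  have i1 : (inner ℝ (-x) (y - x) : ℝ) = s - c := by
    rw [inner_neg_left, inner_sub_right, hxx, ← hc]; ring
  have hGL : ‖(-x : EuclideanSpace ℝ (Fin 3))‖ ^ 2 * ‖y - x‖ ^ 2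
      - (s - c) ^ 2 = s * t - c ^ 2 := by
    rw [← real_inner_self_eq_norm_sq, ← real_inner_self_eq_norm_sq]
    simp only [inner_neg_left, inner_neg_right, inner_sub_left, inner_sub_right,
      hxx, hyy, hyx, ← hc]
    ring
  have i2 : (inner ℝ a b : ℝ) = r ^ 2 * (s - c) := by
    rw [ha, hb, hr2]
    simp only [inner_sub_left, inner_sub_right, inner_add_left, inner_add_right,
      real_inner_smul_left, real_inner_smul_right, hpp, hpx, hxp, hpy, hyp, hxx, hyy, hyx, ← hc]
    ring
  have hG : ‖a‖ ^ 2 * ‖b‖ ^ 2 - (r ^ 2 * (s - c)) ^ 2 = (r ^ 2) ^ 3 * (s * t - c ^ 2) := by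
    rw [← real_inner_self_eq_norm_sq, ← real_inner_self_eq_norm_sq, ha, hb, hr2]
    simp only [inner_sub_left, inner_sub_right, inner_add_left, inner_add_right,
      real_inner_smul_left, real_inner_smul_right, hpp, hpx, hxp, hpy, hyp, hxx, hyy, hyx, ← hc]
    ring
  rw [i1, i2, hGL, hG]
  have hsq : Real.sqrt ((r ^ 2) ^ 3 * (s * t - c ^ 2))
      = r ^ 3 * Real.sqrt (s * t - c ^ 2) := by
    rw [show (r ^ 2) ^ 3 = (r ^ 3) ^ 2 by ring, Real.sqrt_mul (sq_nonneg _),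
      Real.sqrt_sq (by positivity)]
  rw [hsq]
  rcases eq_or_ne (s - c) 0 with h0 | h0
  · rw [h0]; simp
  · field_simp


/-- Spherical trigonometry lemma: let `T = conv{p₁, p₂, p₃}` be a nondegenerate triangle in the
tangent plane of `S²` at `p₁ = p ∈ S²`, with Euclidean angles `φᵢ` at `pᵢ`; let `p'ᵢ` be the
central projections onto `S²`, `φ'ᵢ` the spherical angles of the spherical triangle
`p'₁p'₂p'₃`, and `d'ᵢ` the spherical side lengths opposite `p'ᵢ`.
Then `tan φ₂ = tan φ'₂ · cos d'₃` and `tan φ₃ = tan φ'₃ · cos d'₂`. -/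
theorem tangent_triangle_spherical_angles (p p₁ p₂ p₃ : EuclideanSpace ℝ (Fin 3))
    (hp : ‖p‖ = 1) (hp₁ : p₁ = p)
    (hp₂ : (inner ℝ (p₂ - p) p : ℝ) = 0) (hp₃ : (inner ℝ (p₃ - p) p : ℝ) = 0)
    (hnd : ¬ Collinear ℝ ({p₁, p₂, p₃} : Set (EuclideanSpace ℝ (Fin 3)))) :
    Real.tan (InnerProductGeometry.angle (p₁ - p₂) (p₃ - p₂)) =
      Real.tan (sphericalAngle (sphProj p₁) (sphProj p₂) (sphProj p₃)) *
        Real.cos (sphericalDist (sphProj p₁) (sphProj p₂)) ∧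
    Real.tan (InnerProductGeometry.angle (p₁ - p₃) (p₂ - p₃)) =
      Real.tan (sphericalAngle (sphProj p₁) (sphProj p₃) (sphProj p₂)) *
        Real.cos (sphericalDist (sphProj p₁) (sphProj p₃)) := by
  rw [hp₁]
  have h2 : p + (p₂ - p) = p₂ := by abel
  have h3 : p + (p₃ - p) = p₃ := by abel
  constructor
  · have hk := key p (p₂ - p) (p₃ - p) hp hp₂ hp₃
    rw [h2, h3] at hk
    exact hk
  · have hk := key p (p₃ - p) (p₂ - p) hp hp₃ hp₂
    rw [h2, h3] at hk
    exact hk
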